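/- Let X = {x₁ < x₂ < … < x_n} and Y be finite sets of real numbers and r > 0. Consider the greedy matching constructed by processing x₁, …, x_n in increasing order and matching each x_i to the smallest not-yet-matched y ∈ Y with |x_i − y| < r, leaving x_i unmatched if no such y exists. This greedy matching is a maximum matching of the geometric bipartite graph on (X, Y) with threshold r. -/

import Mathlib

/-- A matching of the geometric bipartite graph on `(X, Y)` with threshold `r`. -/
def IsGeomMatching (r : ℝ) (X Y : Finset ℝ) (M : Finset (ℝ × ℝ)) : Prop :=
  (∀ e ∈ M, e.1 ∈ X ∧ e.2 ∈ Y ∧ |e.1 - e.2| < r) ∧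
  (∀ e ∈ M, ∀ e' ∈ M, e.1 = e'.1 → e = e') ∧
  (∀ e ∈ M, ∀ e' ∈ M, e.2 = e'.2 → e = e')

/-- The greedy matching: process the offline points `xs` in order, matching each one
to the smallest not-yet-matched `y ∈ S` with `|x - y| < r`, leaving it unmatched if
no such `y` exists. -/
noncomputable def greedyOffline (r : ℝ) : List ℝ → Finset ℝ → Finset (ℝ × ℝ)
  | [], _ => ∅
  | x :: xs, S =>
    if h : (S.filter fun y => |x - y| < r).Nonempty then
      insert (x, (S.filter fun y => |x - y| < r).min' h)
        (greedyOffline r xs (S.erase ((S.filter fun y => |x - y| < r).min' h)))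
    else
      greedyOffline r xs S

lemma matching_of (r : ℝ) {X Y X' Y' : Finset ℝ} {M : Finset (ℝ × ℝ)}
    (h : IsGeomMatching r X Y M) (hM : ∀ e ∈ M, e.1 ∈ X' ∧ e.2 ∈ Y') :
    IsGeomMatching r X' Y' M :=
  ⟨fun e he => ⟨(hM e he).1, (hM e he).2, (h.1 e he).2.2⟩, h.2.1, h.2.2⟩

lemma greedy_main (r : ℝ) : ∀ (xs : List ℝ), xs.Pairwise (· < ·) → ∀ S : Finset ℝ,
    IsGeomMatching r xs.toFinset S (greedyOffline r xs S) ∧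
    ∀ M : Finset (ℝ × ℝ), IsGeomMatching r xs.toFinset S M →
      M.card ≤ (greedyOffline r xs S).card := by
  intro xs
  induction xs with
  | nil =>
    intro _ S
    constructor
    · exact ⟨fun e he => absurd he (Finset.notMem_empty e),
        fun e he => absurd he (Finset.notMem_empty e),
        fun e he => absurd he (Finset.notMem_empty e)⟩
    · intro M hM
      have : M = ∅ := Finset.eq_empty_of_forall_notMem fun e he => by
        have := (hM.1 e he).1
        simp at this
      simp [this]
  | cons x xs ih =>
    intro hsort S
    obtain ⟨hx_lt, hsort'⟩ := List.pairwise_cons.mp hsort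
    have hxnot : x ∉ xs.toFinset := by
      simp only [List.mem_toFinset]
      exact fun hmem => lt_irrefl x (hx_lt x hmem)
    by_cases h : (S.filter fun y => |x - y| < r).Nonempty
    · set m := (S.filter fun y => |x - y| < r).min' h with hm_def
      have hm_mem := Finset.min'_mem _ h
      have hmS : m ∈ S := (Finset.mem_filter.mp hm_mem).1
      have hmr : |x - m| < r := (Finset.mem_filter.mp hm_mem).2
      have hmin : ∀ y ∈ S, |x - y| < r → m ≤ y := by
        intro y hy hyr
        have hyf : y ∈ S.filter (fun y => |x - y| < r) := Finset.mem_filter.mpr ⟨hy, hyr⟩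
        exact Finset.min'_le _ y hyf
      have hgr : greedyOffline r (x :: xs) S =
          insert (x, m) (greedyOffline r xs (S.erase m)) := by
        rw [greedyOffline, dif_pos h]
      obtain ⟨hG, hGmax⟩ := ih hsort' (S.erase m)
      set G := greedyOffline r xs (S.erase m) with hG_def
      have hxG : ∀ e ∈ G, e.1 ≠ x := by
        intro e he heq
        have := (hG.1 e he).1
        rw [heq] at this
        exact hxnot this
      have hmG : ∀ e ∈ G, e.2 ≠ m := fun e he =>
        (Finset.mem_erase.mp (hG.1 e he).2.1).1
      have hnot : (x, m) ∉ G := fun hmem => hxG _ hmem rfl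
      have hcard : (greedyOffline r (x :: xs) S).card = G.card + 1 := by
        rw [hgr, Finset.card_insert_of_notMem hnot]
      constructor
      · rw [hgr]
        refine ⟨?_, ?_, ?_⟩
        · intro e he
          rcases Finset.mem_insert.mp he with h1 | h1
          · subst h1
            exact ⟨by simp, hmS, hmr⟩
          · obtain ⟨ha, hb, hc⟩ := hG.1 e h1
            refine ⟨?_, Finset.mem_of_mem_erase hb, hc⟩
            simp only [List.toFinset_cons]
            exact Finset.mem_insert_of_mem ha
        · intro e he e' he' heq
          rcases Finset.mem_insert.mp he with h1 | h1 <;>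
            rcases Finset.mem_insert.mp he' with h2 | h2
          · rw [h1, h2]
          · exact absurd (by rw [← heq, h1]) (hxG e' h2)
          · exact absurd (by rw [heq, h2]) (hxG e h1)
          · exact hG.2.1 e h1 e' h2 heq
        · intro e he e' he' heq
          rcases Finset.mem_insert.mp he with h1 | h1 <;>
            rcases Finset.mem_insert.mp he' with h2 | h2
          · rw [h1, h2]
          · exact absurd (by rw [← heq, h1]) (hmG e' h2)
          · exact absurd (by rw [heq, h2]) (hmG e h1)
          · exact hG.2.2 e h1 e' h2 heq
      · intro M hM
        rw [hcard]
        have hfst : ∀ e ∈ M, e.1 ≠ x → e.1 ∈ xs.toFinset := by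
          intro e he hne
          have := (hM.1 e he).1
          simp only [List.toFinset_cons, Finset.mem_insert] at this
          tauto
        by_cases hxM : ∃ e ∈ M, e.1 = x
        · obtain ⟨e₁, he₁, he₁x⟩ := hxM
          by_cases hmM : ∃ e ∈ M, e.2 = m
          · obtain ⟨e₂, he₂, he₂m⟩ := hmM
            by_cases hee : e₁ = e₂
            · -- e₁ = (x, m): just delete it
              have hM' : IsGeomMatching r xs.toFinset (S.erase m) (M.erase e₁) := by
                refine ⟨?_, ?_, ?_⟩
                · intro e he
                  have heM := Finset.mem_of_mem_erase he
                  have hne := Finset.ne_of_mem_erase he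
                  obtain ⟨ha, hb, hc⟩ := hM.1 e heM
                  have hne1 : e.1 ≠ x := fun hh =>
                    hne (hM.2.1 e heM e₁ he₁ (hh.trans he₁x.symm))
                  have hne2 : e.2 ≠ m := fun hh =>
                    hne ((hM.2.2 e heM e₂ he₂ (hh.trans he₂m.symm)).trans hee.symm)
                  exact ⟨hfst e heM hne1, Finset.mem_erase.mpr ⟨hne2, hb⟩, hc⟩
                · intro e he e' he' heq
                  exact hM.2.1 e (Finset.mem_of_mem_erase he) e' (Finset.mem_of_mem_erase he') heq
                · intro e he e' he' heq
                  exact hM.2.2 e (Finset.mem_of_mem_erase he) e' (Finset.mem_of_mem_erase he') heq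
              have h1 := hGmax _ hM'
              have h2 : (M.erase e₁).card = M.card - 1 := Finset.card_erase_of_mem he₁
              have h3 : 1 ≤ M.card := Finset.card_pos.mpr ⟨e₁, he₁⟩
              omega
            · -- exchange: replace (x, y) and (x', m) by (x', y)
              have hne2x : e₂.1 ≠ x := fun hh =>
                hee ((hM.2.1 e₁ he₁ e₂ he₂ (he₁x.trans hh.symm)))
              have he₁2m : e₁.2 ≠ m := fun hh =>
                hee (hM.2.2 e₁ he₁ e₂ he₂ (hh.trans he₂m.symm))
              obtain ⟨_, hy, hxy⟩ := hM.1 e₁ he₁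
              have hyS : e₁.2 ∈ S := hy
              have hxy' : |x - e₁.2| < r := by rwa [he₁x] at hxy
              have hmy : m ≤ e₁.2 := hmin _ hyS hxy'
              have hx'xs : e₂.1 ∈ xs.toFinset := hfst e₂ he₂ hne2x
              have hxx' : x < e₂.1 := hx_lt _ (List.mem_toFinset.mp hx'xs)
              obtain ⟨_, _, hx'm⟩ := hM.1 e₂ he₂
              have hx'm' : |e₂.1 - m| < r := by rwa [he₂m] at hx'm
              have habs : |e₂.1 - e₁.2| < r := by
                rw [abs_lt] at *
                constructor <;> [linarith [hxy'.1]; linarith [hx'm'.2]]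
              set M₀ := (M.erase e₁).erase e₂ with hM₀
              have hmemM₀ : ∀ e ∈ M₀, e ∈ M ∧ e ≠ e₁ ∧ e ≠ e₂ := by
                intro e he
                exact ⟨Finset.mem_of_mem_erase (Finset.mem_of_mem_erase he),
                  Finset.ne_of_mem_erase (Finset.mem_of_mem_erase he),
                  Finset.ne_of_mem_erase he⟩
              have hnew_not : (e₂.1, e₁.2) ∉ M₀ := by
                intro hmem
                obtain ⟨hmem', _, hne2⟩ := hmemM₀ _ hmem
                exact hne2 (hM.2.1 _ hmem' e₂ he₂ rfl)
              set M' := insert (e₂.1, e₁.2) M₀ with hM'def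
              have hM' : IsGeomMatching r xs.toFinset (S.erase m) M' := by
                refine ⟨?_, ?_, ?_⟩
                · intro e he
                  rcases Finset.mem_insert.mp he with h1 | h1
                  · subst h1
                    exact ⟨hx'xs, Finset.mem_erase.mpr ⟨he₁2m, hyS⟩, habs⟩
                  · obtain ⟨hmem', hne1, hne2⟩ := hmemM₀ _ h1
                    obtain ⟨ha, hb, hc⟩ := hM.1 e hmem'
                    have hex : e.1 ≠ x := fun hh =>
                      hne1 (hM.2.1 e hmem' e₁ he₁ (hh.trans he₁x.symm))
                    have hem : e.2 ≠ m := fun hh =>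
                      hne2 (hM.2.2 e hmem' e₂ he₂ (hh.trans he₂m.symm))
                    exact ⟨hfst e hmem' hex, Finset.mem_erase.mpr ⟨hem, hb⟩, hc⟩
                · intro e he e' he' heq
                  rcases Finset.mem_insert.mp he with h1 | h1 <;>
                    rcases Finset.mem_insert.mp he' with h2 | h2
                  · rw [h1, h2]
                  · exfalso
                    obtain ⟨hmem', _, hne2⟩ := hmemM₀ _ h2
                    subst h1
                    exact hne2 (hM.2.1 e' hmem' e₂ he₂ heq.symm)
                  · exfalso
                    obtain ⟨hmem', _, hne2⟩ := hmemM₀ _ h1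
                    subst h2
                    exact hne2 (hM.2.1 e hmem' e₂ he₂ heq)
                  · exact hM.2.1 e (hmemM₀ _ h1).1 e' (hmemM₀ _ h2).1 heq
                · intro e he e' he' heq
                  rcases Finset.mem_insert.mp he with h1 | h1 <;>
                    rcases Finset.mem_insert.mp he' with h2 | h2
                  · rw [h1, h2]
                  · exfalso
                    obtain ⟨hmem', hne1, _⟩ := hmemM₀ _ h2
                    subst h1
                    exact hne1 (hM.2.2 e' hmem' e₁ he₁ heq.symm)
                  · exfalso
                    obtain ⟨hmem', hne1, _⟩ := hmemM₀ _ h1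
                    subst h2
                    exact hne1 (hM.2.2 e hmem' e₁ he₁ heq)
                  · exact hM.2.2 e (hmemM₀ _ h1).1 e' (hmemM₀ _ h2).1 heq
              have h1 := hGmax _ hM'
              have hc1 : M'.card = M₀.card + 1 := Finset.card_insert_of_notMem hnew_not
              have he₂' : e₂ ∈ M.erase e₁ := Finset.mem_erase.mpr ⟨fun hh => hee hh.symm, he₂⟩
              have hc2 : M₀.card = (M.erase e₁).card - 1 := Finset.card_erase_of_mem he₂'
              have hc3 : (M.erase e₁).card = M.card - 1 := Finset.card_erase_of_mem he₁
              have h2 : 2 ≤ M.card := Finset.one_lt_card.mpr ⟨e₁, he₁, e₂, he₂, hee⟩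
              omega
          · -- delete the edge at x
            push_neg at hmM
            have hM' : IsGeomMatching r xs.toFinset (S.erase m) (M.erase e₁) := by
              refine ⟨?_, ?_, ?_⟩
              · intro e he
                have heM := Finset.mem_of_mem_erase he
                have hne := Finset.ne_of_mem_erase he
                obtain ⟨ha, hb, hc⟩ := hM.1 e heM
                have hne1 : e.1 ≠ x := fun hh =>
                  hne (hM.2.1 e heM e₁ he₁ (hh.trans he₁x.symm))
                exact ⟨hfst e heM hne1, Finset.mem_erase.mpr ⟨hmM e heM, hb⟩, hc⟩
              · intro e he e' he' heq
                exact hM.2.1 e (Finset.mem_of_mem_erase he) e' (Finset.mem_of_mem_erase he') heq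
              · intro e he e' he' heq
                exact hM.2.2 e (Finset.mem_of_mem_erase he) e' (Finset.mem_of_mem_erase he') heq
            have h1 := hGmax _ hM'
            have h2 : (M.erase e₁).card = M.card - 1 := Finset.card_erase_of_mem he₁
            have h3 : 1 ≤ M.card := Finset.card_pos.mpr ⟨e₁, he₁⟩
            omega
        · push_neg at hxM
          by_cases hmM : ∃ e ∈ M, e.2 = m
          · obtain ⟨e₂, he₂, he₂m⟩ := hmM
            have hM' : IsGeomMatching r xs.toFinset (S.erase m) (M.erase e₂) := by
              refine ⟨?_, ?_, ?_⟩
              · intro e he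
                have heM := Finset.mem_of_mem_erase he
                have hne := Finset.ne_of_mem_erase he
                obtain ⟨ha, hb, hc⟩ := hM.1 e heM
                have hne2 : e.2 ≠ m := fun hh =>
                  hne (hM.2.2 e heM e₂ he₂ (hh.trans he₂m.symm))
                exact ⟨hfst e heM (hxM e heM), Finset.mem_erase.mpr ⟨hne2, hb⟩, hc⟩
              · intro e he e' he' heq
                exact hM.2.1 e (Finset.mem_of_mem_erase he) e' (Finset.mem_of_mem_erase he') heq
              · intro e he e' he' heq
                exact hM.2.2 e (Finset.mem_of_mem_erase he) e' (Finset.mem_of_mem_erase he') heq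
            have h1 := hGmax _ hM'
            have h2 : (M.erase e₂).card = M.card - 1 := Finset.card_erase_of_mem he₂
            have h3 : 1 ≤ M.card := Finset.card_pos.mpr ⟨e₂, he₂⟩
            omega
          · push_neg at hmM
            have hM' : IsGeomMatching r xs.toFinset (S.erase m) M := by
              refine matching_of r hM ?_
              intro e he
              obtain ⟨ha, hb, hc⟩ := hM.1 e he
              exact ⟨hfst e he (hxM e he), Finset.mem_erase.mpr ⟨hmM e he, hb⟩⟩
            have h1 := hGmax _ hM'
            omega
    · -- no candidate for x
      have hgr : greedyOffline r (x :: xs) S = greedyOffline r xs S := by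
        rw [greedyOffline, dif_neg h]
      have hempty : ∀ y ∈ S, ¬ |x - y| < r := by
        intro y hy hyr
        exact h ⟨y, Finset.mem_filter.mpr ⟨hy, hyr⟩⟩
      obtain ⟨hG, hGmax⟩ := ih hsort' S
      rw [hgr]
      constructor
      · refine matching_of r hG ?_
        intro e he
        obtain ⟨ha, hb, _⟩ := hG.1 e he
        refine ⟨?_, hb⟩
        simp only [List.toFinset_cons]
        exact Finset.mem_insert_of_mem ha
      · intro M hM
        refine hGmax M (matching_of r hM ?_)
        intro e he
        obtain ⟨ha, hb, hc⟩ := hM.1 e he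
        refine ⟨?_, hb⟩
        simp only [List.toFinset_cons, Finset.mem_insert] at ha
        rcases ha with ha | ha
        · exact absurd hc (by rw [ha]; exact hempty e.2 hb)
        · exact ha

/-- The greedy matching, processing the points of `X` in increasing order, is a
maximum matching of the geometric bipartite graph on `(X, Y)` with threshold `r`. -/
theorem stmt2 (r : ℝ) (hr : 0 < r) (X Y : Finset ℝ) (xs : List ℝ)
    (hsort : xs.Pairwise (· < ·)) (hX : xs.toFinset = X) :
    IsGeomMatching r X Y (greedyOffline r xs Y) ∧
    ∀ M : Finset (ℝ × ℝ), IsGeomMatching r X Y M →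
      M.card ≤ (greedyOffline r xs Y).card := by
  subst hX
  exact greedy_main r xs hsort Y
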